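/- For all integers k ≥ 0 and 0 ≤ r ≤ s ≤ k, the identity of formal power series (Σ_{n≥0} C_n^{(k)}(r→s) x^n) · Û_{k+1}(x) = x^{s−r} · Û_r(x) · Û_{k−s}(x) holds in ℚ⟦x⟧; and for all integers 0 ≤ s ≤ r ≤ k one has (Σ_{n≥0} C_n^{(k)}(r→s) x^n) · Û_{k+1}(x) = x^{r−s} · Û_s(x) · Û_{k−r}(x). (Equivalently, Σ_{n≥0} C_n^{(k)}(r→s) x^n = U_r(1/(2x)) U_{k−s}(1/(2x)) / (x U_{k+1}(1/(2x))) for r ≤ s, and the same expression with r and s interchanged for r ≥ s.) -/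

import Mathlib

/-- Number of bounded up-down paths from `(0,r)` to `(n,s)` staying weakly
between the lines `y = 0` and `y = k`. -/
noncomputable def pathCount (k n r s : ℕ) : ℕ :=
  Nat.card {h : Fin (n + 1) → ℤ //
    h 0 = r ∧ h (Fin.last n) = s ∧
    (∀ i, 0 ≤ h i ∧ h i ≤ k) ∧
    (∀ i : Fin n, |h i.succ - h i.castSucc| = 1)}

/-- `Uhat m = Σ_{j≥0} (−1)^j binom(m−j, j) x^{2j}`, i.e. `x^m U_m(1/(2x))`
where `U_m` is the `m`-th Chebyshev polynomial of the second kind. -/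
noncomputable def Uhat (m : ℕ) : PowerSeries ℚ :=
  ∑ j ∈ Finset.range (m + 1),
    PowerSeries.C ((-1 : ℚ) ^ j * ((m - j).choose j : ℚ)) * PowerSeries.X ^ (2 * j)

def PathProp (k n r s : ℕ) (h : Fin (n + 1) → ℤ) : Prop :=
  h 0 = r ∧ h (Fin.last n) = s ∧ (∀ i, 0 ≤ h i ∧ h i ≤ k) ∧
    (∀ i : Fin n, |h i.succ - h i.castSucc| = 1)

lemma pathCount_def (k n r s : ℕ) :
    pathCount k n r s = Nat.card {h : Fin (n+1) → ℤ // PathProp k n r s h} := rfl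

instance pathFinite (k n r s : ℕ) : Finite {h : Fin (n+1) → ℤ // PathProp k n r s h} := by
  apply Finite.of_injective
    (fun p => (fun i => (⟨p.1 i, p.2.2.2.1 i⟩ : Set.Icc (0:ℤ) (k:ℤ))) : _ → Fin (n+1) → Set.Icc (0:ℤ) (k:ℤ))
  intro a b hab
  apply Subtype.ext
  funext i
  exact congrArg Subtype.val (congrFun hab i)

lemma pathCount_zero (k r s : ℕ) (hr : r ≤ k) :
    pathCount k 0 r s = if r = s then 1 else 0 := by
  rw [pathCount_def]
  split_ifs with h
  · subst h
    rw [Nat.card_eq_one_iff_unique]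
    constructor
    · constructor
      rintro ⟨h1, p1⟩ ⟨h2, p2⟩
      apply Subtype.ext
      funext i
      have hi : i = 0 := Subsingleton.elim (α := Fin 1) i 0
      show h1 i = h2 i
      rw [hi, p1.1, p2.1]
    · exact ⟨⟨fun _ => (r : ℤ), rfl, rfl, fun i => ⟨by positivity, by show (r:ℤ) ≤ k; exact_mod_cast hr⟩,
        fun i => i.elim0⟩⟩
  · rw [Nat.card_eq_zero]
    left
    constructor
    rintro ⟨f, p0, pl, _, _⟩
    apply h
    have : (Fin.last 0) = (0 : Fin 1) := rfl
    rw [this, p0] at pl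
    exact_mod_cast pl

lemma pathCount_gt (k n r s : ℕ) (hk : k < r) : pathCount k n r s = 0 := by
  rw [pathCount_def, Nat.card_eq_zero]
  left
  constructor
  rintro ⟨f, p0, _, pb, _⟩
  have := (pb 0).2
  rw [p0] at this
  exact absurd this (by exact_mod_cast Nat.not_le.mpr hk)

def tailEquiv (k n r s v : ℕ) (hr : r ≤ k) (hstep : |(v:ℤ) - (r:ℤ)| = 1) :
    {p : {h : Fin (n+2) → ℤ // PathProp k (n+1) r s h} // p.1 1 = (v:ℤ)} ≃
      {h : Fin (n+1) → ℤ // PathProp k n v s h} where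
  toFun p := ⟨fun i => p.1.1 i.succ, by
    obtain ⟨⟨h, h0, hl, hb, hss⟩, h1⟩ := p
    refine ⟨?_, ?_, fun i => hb i.succ, fun i => ?_⟩
    · show h (Fin.succ 0) = (v:ℤ)
      rwa [Fin.succ_zero_eq_one]
    · show h (Fin.last n).succ = (s:ℤ)
      rwa [Fin.succ_last]
    · show |h i.succ.succ - h i.castSucc.succ| = 1
      rw [Fin.succ_castSucc]
      exact hss i.succ⟩
  invFun q := ⟨⟨Fin.cons (r:ℤ) q.1, by
    obtain ⟨h0, hl, hb, hss⟩ := q.2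
    refine ⟨Fin.cons_zero _ _, ?_, fun i => ?_, fun i => ?_⟩
    · have e : Fin.last (n+1) = (Fin.last n).succ := rfl
      rw [e, Fin.cons_succ]
      exact hl
    · induction i using Fin.cases with
      | zero =>
        rw [Fin.cons_zero]
        exact ⟨Int.natCast_nonneg r, by exact_mod_cast hr⟩
      | succ j =>
        rw [Fin.cons_succ]
        exact hb j
    · induction i using Fin.cases with
      | zero =>
        rw [Fin.castSucc_zero, Fin.cons_zero, Fin.succ_zero_eq_one,
          show (1 : Fin (n+2)) = Fin.succ 0 from (Fin.succ_zero_eq_one).symm, Fin.cons_succ]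
        rw [h0]
        exact hstep
      | succ j =>
        rw [← Fin.succ_castSucc, Fin.cons_succ, Fin.cons_succ]
        exact hss j⟩, by
    show (Fin.cons (r:ℤ) q.1 : Fin (n+2) → ℤ) 1 = (v:ℤ)
    rw [show (1 : Fin (n+2)) = Fin.succ 0 from (Fin.succ_zero_eq_one).symm, Fin.cons_succ]
    exact q.2.1⟩
  left_inv p := by
    apply Subtype.ext
    apply Subtype.ext
    have h0 := p.1.2.1
    show (Fin.cons (r:ℤ) (Fin.tail p.1.1) : Fin (n+2) → ℤ) = p.1.1
    rw [← h0, Fin.cons_self_tail]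
  right_inv q := by
    apply Subtype.ext
    show Fin.tail (Fin.cons (r:ℤ) q.1 : Fin (n+2) → ℤ) = q.1
    rw [Fin.tail_cons]

lemma card_tail (k n r s v : ℕ) (hr : r ≤ k) (hstep : |(v:ℤ) - (r:ℤ)| = 1) :
    Nat.card {p : {h : Fin (n+2) → ℤ // PathProp k (n+1) r s h} // p.1 1 = (v:ℤ)}
      = pathCount k n v s := by
  rw [pathCount_def]
  exact Nat.card_congr (tailEquiv k n r s v hr hstep)

lemma pathCount_succ (k n r s : ℕ) (hr : r ≤ k) :
    pathCount k (n+1) r s =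
      (if r = 0 then 0 else pathCount k n (r-1) s) + pathCount k n (r+1) s := by
  classical
  rw [pathCount_def]
  rw [← Nat.card_congr (Equiv.sumCompl
    (fun p : {h : Fin (n+2) → ℤ // PathProp k (n+1) r s h} => p.1 1 = (r:ℤ)+1))]
  rw [Nat.card_sum]
  have hup : Nat.card {p : {h : Fin (n+2) → ℤ // PathProp k (n+1) r s h} // p.1 1 = (r:ℤ)+1}
      = pathCount k n (r+1) s := by
    have := card_tail k n r s (r+1) hr (by push_cast; simp)
    push_cast at this
    exact this
  have hiff : ∀ p : {h : Fin (n+2) → ℤ // PathProp k (n+1) r s h},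
      ¬(p.1 1 = (r:ℤ)+1) ↔ p.1 1 = (r:ℤ)-1 := by
    rintro ⟨h, h0, hl, hb, hss⟩
    have := hss 0
    rw [Fin.succ_zero_eq_one, Fin.castSucc_zero, h0] at this
    show ¬(h 1 = (r:ℤ)+1) ↔ h 1 = (r:ℤ)-1
    rcases abs_eq (by norm_num : (0:ℤ) ≤ 1) |>.mp this with h1 | h1
    · constructor
      · intro hc; exact absurd (by linarith) hc
      · intro hc; linarith
    · constructor
      · intro _; linarith
      · intro hc hc2; linarith
  rw [Nat.card_congr (Equiv.subtypeEquivRight hiff)]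
  have hdown : Nat.card {p : {h : Fin (n+2) → ℤ // PathProp k (n+1) r s h} // p.1 1 = (r:ℤ)-1}
      = if r = 0 then 0 else pathCount k n (r-1) s := by
    rcases Nat.eq_zero_or_pos r with rfl | hpos
    · rw [if_pos rfl, Nat.card_eq_zero]
      left
      constructor
      rintro ⟨p, h1⟩
      have := (p.2.2.2.1 1).1
      rw [show p.1 1 = ((0:ℕ):ℤ) - 1 from h1] at this
      norm_num at this
    · rw [if_neg (by omega)]
      have := card_tail k n r s (r-1) hr (by
        have : ((r - 1 : ℕ) : ℤ) = (r:ℤ) - 1 := by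
          push_cast [hpos]; ring
        rw [this]; simp)
      rw [show ((r - 1 : ℕ) : ℤ) = (r:ℤ) - 1 from by push_cast [hpos]; ring] at this
      exact this
  rw [hup, hdown, add_comm]

open PowerSeries


lemma coeff_Uhat_even (m j : ℕ) :
    coeff (2 * j) (Uhat m) = (-1 : ℚ) ^ j * ((m - j).choose j : ℚ) := by
  rw [Uhat, map_sum]
  rw [Finset.sum_eq_single j]
  · rw [coeff_C_mul, coeff_X_pow, if_pos rfl, mul_one]
  · intro i _ hne
    rw [coeff_C_mul, coeff_X_pow, if_neg (by omega), mul_zero]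
  · intro h
    have hj : m + 1 ≤ j := by simpa [Finset.mem_range] using h
    have h0 : (m - j).choose j = 0 := Nat.choose_eq_zero_of_lt (by omega)
    rw [h0]
    simp

lemma coeff_Uhat_odd (m j : ℕ) : coeff (2 * j + 1) (Uhat m) = 0 := by
  rw [Uhat, map_sum]
  apply Finset.sum_eq_zero
  intro i _
  rw [coeff_C_mul, coeff_X_pow, if_neg (by omega), mul_zero]

lemma Uhat_zero : Uhat 0 = 1 := by simp [Uhat]

lemma Uhat_one : Uhat 1 = 1 := by
  rw [Uhat, Finset.sum_range_succ, Finset.sum_range_one]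
  norm_num

lemma Uhat_rec (m : ℕ) : Uhat (m + 2) = Uhat (m + 1) - PowerSeries.X ^ 2 * Uhat m := by
  ext n
  rw [map_sub, coeff_X_pow_mul']
  rcases Nat.even_or_odd n with ⟨j, hj⟩ | ⟨j, hj⟩
  · subst hj
    rw [show j + j = 2 * j from by ring, coeff_Uhat_even, coeff_Uhat_even]
    cases j with
    | zero => norm_num
    | succ i =>
      rw [if_pos (by omega), show 2 * (i + 1) - 2 = 2 * i from by omega, coeff_Uhat_even]
      have hp : (m + 2 - (i + 1)).choose (i + 1) =
          (m + 1 - (i + 1)).choose (i + 1) + (m + 1 - (i + 1)).choose i := by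
        rcases le_or_gt (i + 1) (m + 1) with h | h
        · have : m + 2 - (i + 1) = (m + 1 - (i + 1)) + 1 := by omega
          rw [this, Nat.choose_succ_succ']
          omega
        · rw [Nat.choose_eq_zero_of_lt (by omega), Nat.choose_eq_zero_of_lt (by omega),
            Nat.choose_eq_zero_of_lt (by omega)]
      rw [hp]
      push_cast
      ring
  · subst hj
    rw [coeff_Uhat_odd, coeff_Uhat_odd]
    cases j with
    | zero => norm_num
    | succ i =>
      rw [if_pos (by omega), show 2 * (i + 1) + 1 - 2 = 2 * i + 1 from by omega, coeff_Uhat_odd]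
      ring
lemma Uhat_LM (a : ℕ) : ∀ b : ℕ,
    (Uhat (a + 1) * Uhat (b + 1) = Uhat (a + b + 2) + PowerSeries.X ^ 2 * (Uhat a * Uhat b)) ∧
    (Uhat (a + 1) * Uhat b + Uhat a * Uhat (b + 1) = Uhat a * Uhat b + Uhat (a + b + 1)) := by
  induction a with
  | zero =>
    intro b
    simp only [Nat.zero_add]
    constructor
    · rw [Uhat_one, Uhat_zero, Uhat_rec b]
      ring
    · rw [Uhat_one, Uhat_zero]
      ring
  | succ a ih =>
    intro b
    obtain ⟨L, M⟩ := ih b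
    constructor
    · have h1 := Uhat_rec a
      have h2 := Uhat_rec (a + b + 1)
      have e : a + 1 + b + 2 = a + b + 1 + 2 := by ring
      rw [e, h2, h1]
      simp only [show a + b + 1 + 1 = a + b + 2 from by omega]
      linear_combination L - PowerSeries.X ^ 2 * M
    · have h1 := Uhat_rec a
      have e : a + 1 + b + 1 = a + b + 2 := by ring
      rw [e, h1]
      linear_combination L
lemma Uhat_L (a b : ℕ) :
    Uhat (a + 1) * Uhat (b + 1) = Uhat (a + b + 2) + PowerSeries.X ^ 2 * (Uhat a * Uhat b) :=
  (Uhat_LM a b).1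
lemma Uhat_M (a b : ℕ) :
    Uhat (a + 1) * Uhat b + Uhat a * Uhat (b + 1) = Uhat a * Uhat b + Uhat (a + b + 1) :=
  (Uhat_LM a b).2
lemma Uhat_N (a b : ℕ) :
    Uhat (a + 1) * Uhat (b + 1)
      = Uhat (a + b + 3) + PowerSeries.X ^ 2 * (Uhat a * Uhat (b + 1) + Uhat (a + 1) * Uhat b) := by
  have h := Uhat_rec (a + b + 1)
  have e : a + b + 3 = a + b + 1 + 2 := by ring
  rw [e, h]
  simp only [show a + b + 1 + 1 = a + b + 2 from by omega]
  linear_combination Uhat_L a b - PowerSeries.X ^ 2 * Uhat_M a b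


noncomputable def Fgen (k s r : ℕ) : PowerSeries ℚ :=
  PowerSeries.mk fun n => (pathCount k n r s : ℚ)

lemma Fgen_rec (k s r : ℕ) (hr : r ≤ k) :
    Fgen k s r = (if r = s then 1 else 0)
      + PowerSeries.X * ((if r = 0 then 0 else Fgen k s (r - 1)) + Fgen k s (r + 1)) := by
  ext n
  rw [map_add]
  cases n with
  | zero =>
    rw [coeff_zero_X_mul, add_zero, Fgen, coeff_mk, pathCount_zero k r s hr]
    split_ifs <;> simp
  | succ n =>
    rw [coeff_succ_X_mul, map_add, Fgen, coeff_mk, pathCount_succ k n r s hr]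
    push_cast
    split_ifs with h1 h2 <;>
      simp [Fgen, coeff_mk, PowerSeries.coeff_one]

lemma Fgen_top (k s : ℕ) : Fgen k s (k + 1) = 0 := by
  ext n
  simp [Fgen, coeff_mk, pathCount_gt k n (k+1) s (by omega)]

noncomputable def Rgen (k s r : ℕ) : PowerSeries ℚ :=
  if r ≤ s then PowerSeries.X ^ (s - r) * Uhat r * Uhat (k - s)
  else if r ≤ k then PowerSeries.X ^ (r - s) * Uhat s * Uhat (k - r)
  else 0

lemma Rgen_le (k s r : ℕ) (h1 : r ≤ s) :
    Rgen k s r = PowerSeries.X ^ (s - r) * Uhat r * Uhat (k - s) := by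
  rw [Rgen, if_pos h1]

lemma Rgen_ge (k s r : ℕ) (h1 : s ≤ r) (h2 : r ≤ k) :
    Rgen k s r = PowerSeries.X ^ (r - s) * Uhat s * Uhat (k - r) := by
  rcases eq_or_lt_of_le h1 with rfl | h
  · rw [Rgen, if_pos le_rfl]
  · rw [Rgen, if_neg (by omega), if_pos h2]

lemma Rgen_top (k s : ℕ) (hs : s ≤ k) : Rgen k s (k + 1) = 0 := by
  rw [Rgen, if_neg (by omega), if_neg (by omega)]

lemma Rgen_rec (k s r : ℕ) (hs : s ≤ k) (hr : r ≤ k) :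
    Rgen k s r = (if r = s then Uhat (k + 1) else 0)
      + PowerSeries.X * ((if r = 0 then 0 else Rgen k s (r - 1)) + Rgen k s (r + 1)) := by
  rcases lt_trichotomy r s with hlt | rfl | hgt
  · rw [if_neg (by omega)]
    rcases Nat.eq_zero_or_pos r with rfl | hpos
    · obtain ⟨d, rfl⟩ : ∃ d, s = d + 1 := ⟨s - 1, by omega⟩
      rw [if_pos rfl, Rgen_le k _ 0 (by omega), Rgen_le k _ 1 (by omega)]
      rw [show d + 1 - 0 = d + 1 from by omega, show d + 1 - 1 = d from by omega,
        Uhat_zero, Uhat_one]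
      ring
    · obtain ⟨t, rfl⟩ : ∃ t, r = t + 1 := ⟨r - 1, by omega⟩
      obtain ⟨e, rfl⟩ : ∃ e, s = t + e + 2 := ⟨s - t - 2, by omega⟩
      rw [if_neg (by omega), Rgen_le k _ (t+1) (by omega), Rgen_le k _ (t+1-1) (by omega),
        Rgen_le k _ (t+1+1) (by omega)]
      rw [show t + e + 2 - (t + 1) = e + 1 from by omega,
        show t + 1 - 1 = t from by omega,
        show t + e + 2 - t = e + 2 from by omega,
        show t + e + 2 - (t + 1 + 1) = e from by omega,
        Uhat_rec t]
      ring
  · rw [if_pos rfl]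
    rcases Nat.lt_or_ge r k with hk | hk
    · rcases Nat.eq_zero_or_pos r with rfl | hpos
      · obtain ⟨c, rfl⟩ : ∃ c, k = c + 1 := ⟨k - 1, by omega⟩
        rw [if_pos rfl, Rgen_le _ _ 0 le_rfl, Rgen_ge _ _ 1 (by omega) (by omega)]
        rw [show c + 1 - 0 = c + 1 from by omega, show c + 1 - 1 = c from by omega,
          Nat.sub_self, Nat.sub_zero, Uhat_zero, Uhat_rec c]
        ring
      · obtain ⟨a, rfl⟩ : ∃ a, r = a + 1 := ⟨r - 1, by omega⟩
        obtain ⟨b, rfl⟩ : ∃ b, k = a + b + 2 := ⟨k - a - 2, by omega⟩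
        rw [if_neg (by omega), Rgen_le _ _ (a+1) le_rfl,
          Rgen_le _ _ (a+1-1) (by omega), Rgen_ge _ _ (a+1+1) (by omega) (by omega)]
        rw [show a + 1 - (a + 1) = 0 from by omega,
          show a + b + 2 - (a + 1) = b + 1 from by omega,
          show a + 1 - 1 = a from by omega,
          show a + 1 - a = 1 from by omega,
          show a + 1 + 1 - (a + 1) = 1 from by omega,
          show a + b + 2 - (a + 1 + 1) = b from by omega,
          show a + b + 2 + 1 = a + b + 3 from by omega]
        linear_combination Uhat_N a b
    · have hrk : r = k := by omega
      subst hrk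
      rcases Nat.eq_zero_or_pos r with rfl | hpos
      · rw [if_pos rfl, Rgen_le _ _ 0 le_rfl, Rgen_top _ _ le_rfl, Uhat_zero]
        simp [Uhat_one]
      · obtain ⟨t, rfl⟩ : ∃ t, r = t + 1 := ⟨r - 1, by omega⟩
        rw [if_neg (by omega), Rgen_ge _ _ (t+1) le_rfl le_rfl,
          Rgen_le _ _ (t+1-1) (by omega), Rgen_top _ _ le_rfl]
        rw [show t + 1 - 1 = t from by omega, Nat.sub_self,
          show t + 1 - t = 1 from by omega, Uhat_rec t, Uhat_zero]
        ring
  · rw [if_neg (by omega), if_neg (by omega)]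
    obtain ⟨e, rfl⟩ : ∃ e, r = s + e + 1 := ⟨r - s - 1, by omega⟩
    rcases Nat.lt_or_ge (s + e + 1) k with hk | hk
    · obtain ⟨c, rfl⟩ : ∃ c, k = s + e + c + 2 := ⟨k - s - e - 2, by omega⟩
      rw [Rgen_ge _ _ (s+e+1) (by omega) (by omega),
        Rgen_ge _ _ (s+e+1-1) (by omega) (by omega),
        Rgen_ge _ _ (s+e+1+1) (by omega) (by omega)]
      rw [show s + e + 1 - s = e + 1 from by omega,
        show s + e + c + 2 - (s + e + 1) = c + 1 from by omega,
        show s + e + 1 - 1 = s + e from by omega,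
        show s + e - s = e from by omega,
        show s + e + c + 2 - (s + e) = c + 2 from by omega,
        show s + e + 1 + 1 - s = e + 2 from by omega,
        show s + e + c + 2 - (s + e + 1 + 1) = c from by omega,
        Uhat_rec c]
      ring
    · have hrk : s + e + 1 = k := by omega
      subst hrk
      rw [Rgen_ge _ _ (s+e+1) (by omega) (by omega),
        Rgen_ge _ _ (s+e+1-1) (by omega) (by omega),
        Rgen_top _ _ (by omega)]
      rw [show s + e + 1 - s = e + 1 from by omega, Nat.sub_self,
        show s + e + 1 - 1 = s + e from by omega,
        show s + e - s = e from by omega,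
        show s + e + 1 - (s + e) = 1 from by omega, Uhat_zero, Uhat_one]
      ring

lemma coeff_D (k s : ℕ) (hs : s ≤ k) :
    ∀ n r, r ≤ k + 1 →
      PowerSeries.coeff n (Fgen k s r * Uhat (k + 1) - Rgen k s r) = 0 := by
  have hD : ∀ r ≤ k, Fgen k s r * Uhat (k + 1) - Rgen k s r
      = PowerSeries.X * ((if r = 0 then 0 else
            (Fgen k s (r - 1) * Uhat (k + 1) - Rgen k s (r - 1)))
          + (Fgen k s (r + 1) * Uhat (k + 1) - Rgen k s (r + 1))) := by
    intro r hr
    rw [Fgen_rec k s r hr, Rgen_rec k s r hs hr]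
    split_ifs <;> ring
  intro n
  induction n with
  | zero =>
    intro r hr
    rcases Nat.lt_or_ge r (k + 1) with h | h
    · rw [hD r (by omega), coeff_zero_X_mul]
    · have : r = k + 1 := by omega
      subst this
      rw [Fgen_top, Rgen_top k s hs, zero_mul, sub_zero, map_zero]
  | succ n ih =>
    intro r hr
    rcases Nat.lt_or_ge r (k + 1) with h | h
    · rw [hD r (by omega), coeff_succ_X_mul, map_add]
      rw [ih (r + 1) (by omega)]
      split_ifs with h0
      · simp
      · rw [ih (r - 1) (by omega)]
        simp
    · have : r = k + 1 := by omega
      subst this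
      rw [Fgen_top, Rgen_top k s hs, zero_mul, sub_zero, map_zero]

lemma gen_eq (k s r : ℕ) (hs : s ≤ k) (hr : r ≤ k) :
    Fgen k s r * Uhat (k + 1) = Rgen k s r := by
  rw [← sub_eq_zero]
  ext n
  rw [map_zero]
  exact coeff_D k s hs n r (by omega)

theorem statement0 (k r s : ℕ) (hr : r ≤ k) (hs : s ≤ k) :
    (r ≤ s →
      (PowerSeries.mk fun n => (pathCount k n r s : ℚ)) * Uhat (k + 1)
        = PowerSeries.X ^ (s - r) * Uhat r * Uhat (k - s)) ∧
    (s ≤ r →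
      (PowerSeries.mk fun n => (pathCount k n r s : ℚ)) * Uhat (k + 1)
        = PowerSeries.X ^ (r - s) * Uhat s * Uhat (k - r)) := by
  have h := gen_eq k s r hs hr
  constructor
  · intro hle
    rw [show (PowerSeries.mk fun n => (pathCount k n r s : ℚ)) = Fgen k s r from rfl, h,
      Rgen_le k s r hle]
  · intro hge
    rw [show (PowerSeries.mk fun n => (pathCount k n r s : ℚ)) = Fgen k s r from rfl, h,
      Rgen_ge k s r hge hr]
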